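/- arXiv:1309.6770 — 9 statements merged into one kernel-verified Lean document; each statement's English description precedes it below -/
import Mathlib

section
/- If ψ : Y → ℝ satisfies ∑_{j=1}^n ψ(y_j + y) = ∑_{j=1}^n ψ(y_j − y) for all y₁,…,y_n, y ∈ Y with ∑ y_j = 0 (n ≥ 3), and ψ(−y) = ψ(y) for all y, then ψ satisfies ψ(y₁+y₂+y) − ψ(y₁+y₂−y) = ψ(y₁+y) − ψ(y₁−y) + ψ(y₂+y) − ψ(y₂−y) for all y₁, y₂, y ∈ Y. -/
theorem stmt2 {Y : Type*} [AddCommGroup Y] (n : ℕ) (hn : 3 ≤ n) (ψ : Y → ℝ)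
    (heq : ∀ (ys : Fin n → Y) (y : Y), (∑ j, ys j) = 0 →
      (∑ j, ψ (ys j + y)) = ∑ j, ψ (ys j - y))
    (hsym : ∀ y : Y, ψ (-y) = ψ y) :
    ∀ y₁ y₂ y : Y, ψ (y₁ + y₂ + y) - ψ (y₁ + y₂ - y) =
      ψ (y₁ + y) - ψ (y₁ - y) + (ψ (y₂ + y) - ψ (y₂ - y)) := by
  intro y₁ y₂ y
  set a : Fin n := ⟨0, by omega⟩ with ha
  set b : Fin n := ⟨1, by omega⟩ with hb
  set c : Fin n := ⟨2, by omega⟩ with hc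
  have hab : a ≠ b := by simp [ha, hb, Fin.ext_iff]
  have hac : a ≠ c := by simp [ha, hc, Fin.ext_iff]
  have hbc : b ≠ c := by simp [hb, hc, Fin.ext_iff]
  set ys : Fin n → Y := fun j => if j = a then y₁ else if j = b then y₂
    else if j = c then -(y₁+y₂) else 0 with hys
  have key : ∀ f : Y → ℝ, (∑ j, f (ys j))
      = f y₁ + f y₂ + f (-(y₁+y₂)) + (n - 3 : ℕ) * f 0 := by
    intro f
    have hsub : ({a, b, c} : Finset (Fin n)) ⊆ Finset.univ := Finset.subset_univ _
    rw [← Finset.sum_sdiff hsub]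
    have h1 : ∑ j ∈ ({a, b, c} : Finset (Fin n)), f (ys j)
        = f y₁ + f y₂ + f (-(y₁+y₂)) := by
      rw [Finset.sum_insert (by simp [hab, hac]), Finset.sum_insert (by simp [hbc]),
        Finset.sum_singleton]
      simp [hys, hab, hbc, hab.symm, hac.symm, hbc.symm]
      ring
    have h2 : ∑ j ∈ Finset.univ \ ({a, b, c} : Finset (Fin n)), f (ys j)
        = (n - 3 : ℕ) * f 0 := by
      rw [Finset.sum_congr rfl (fun j hj => ?_), Finset.sum_const, nsmul_eq_mul]
      · congr 1
        rw [Finset.card_sdiff_of_subset hsub, Finset.card_univ]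
        simp [Finset.card_insert_of_notMem, hab, hac, hbc]
      · simp only [Finset.mem_sdiff, Finset.mem_insert, Finset.mem_singleton,
          Finset.mem_univ, true_and, not_or] at hj
        simp [hys, hj.1, hj.2.1, hj.2.2]
    rw [h1, h2]
    ring
  have hsum : (∑ j, ys j) = 0 := by
    have := key (fun _ => (1:ℝ))  -- dummy, not usable; compute directly
    clear this
    have hsub : ({a, b, c} : Finset (Fin n)) ⊆ Finset.univ := Finset.subset_univ _
    rw [← Finset.sum_sdiff hsub]
    have h1 : ∑ j ∈ ({a, b, c} : Finset (Fin n)), ys j = 0 := by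
      rw [Finset.sum_insert (by simp [hab, hac]), Finset.sum_insert (by simp [hbc]),
        Finset.sum_singleton]
      simp [hys, hab, hbc, hab.symm, hac.symm, hbc.symm]
    have h2 : ∑ j ∈ Finset.univ \ ({a, b, c} : Finset (Fin n)), ys j = 0 := by
      apply Finset.sum_eq_zero
      intro j hj
      simp only [Finset.mem_sdiff, Finset.mem_insert, Finset.mem_singleton,
        Finset.mem_univ, true_and, not_or] at hj
      simp [hys, hj.1, hj.2.1, hj.2.2]
    rw [h1, h2, add_zero]
  have H := heq ys y hsum
  rw [key (fun z => ψ (z + y)), key (fun z => ψ (z - y))] at H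
  simp only [zero_add, zero_sub] at H
  have e1 : ψ (-(y₁ + y₂) + y) = ψ (y₁ + y₂ - y) := by
    rw [← hsym]; congr 1; abel
  have e2 : ψ (-(y₁ + y₂) - y) = ψ (y₁ + y₂ + y) := by
    rw [← hsym]; congr 1; abel
  have e3 : ψ (-y) = ψ y := hsym y
  rw [e1, e2, e3] at H
  linarith
end

section
/- If ψ : Y → ℝ satisfies the equation ψ(y₁+y₂+y) − ψ(y₁+y₂−y) = ψ(y₁+y) − ψ(y₁−y) + ψ(y₂+y) − ψ(y₂−y) for all y₁, y₂, y ∈ Y, then Δ_k³ Δ_{2h} ψ(y) = 0 for all k, h, y ∈ Y, where Δ_h ψ(y) = ψ(y+h) − ψ(y). -/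
/-- The forward difference operator `Δ_h ψ (y) = ψ (y + h) - ψ y`. -/
def fdiff {Y : Type*} [Add Y] (h : Y) (ψ : Y → ℝ) : Y → ℝ :=
  fun y => ψ (y + h) - ψ y

theorem stmt3 {Y : Type*} [AddCommGroup Y] (ψ : Y → ℝ)
    (h1 : ∀ y₁ y₂ y : Y, ψ (y₁ + y₂ + y) - ψ (y₁ + y₂ - y) =
      ψ (y₁ + y) - ψ (y₁ - y) + (ψ (y₂ + y) - ψ (y₂ - y))) :
    ∀ k h y : Y, fdiff k (fdiff k (fdiff k (fdiff (2 • h) ψ))) y = 0 := by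
  intro k h y
  have key : ∀ z : Y, fdiff k (fdiff (2 • h) ψ) z = ψ (k + h) - ψ (k - h) := by
    intro z
    have H := h1 (z + h) k h
    have e1 : z + h + k + h = z + k + 2 • h := by abel
    have e2 : z + h + k - h = z + k := by abel
    have e3 : z + h + h = z + 2 • h := by abel
    have e4 : z + h - h = z := by abel
    rw [e1, e2, e3, e4] at H
    show fdiff (2 • h) ψ (z + k) - fdiff (2 • h) ψ z = ψ (k + h) - ψ (k - h)
    simp only [fdiff]
    linarith
  have key2 : ∀ z, fdiff k (fdiff k (fdiff (2 • h) ψ)) z = 0 := by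
    intro z
    show fdiff k (fdiff (2 • h) ψ) (z + k) - fdiff k (fdiff (2 • h) ψ) z = 0
    rw [key, key]; ring
  show fdiff k (fdiff k (fdiff (2 • h) ψ)) (y + k) - fdiff k (fdiff k (fdiff (2 • h) ψ)) y = 0
  rw [key2, key2]; ring
end

section
/- Let Y = Y₁ × Y₂ be a product of abelian groups and m : Y → ℂ a function of absolute value 1 satisfying m(u+v)·m(u−v) = m(u)² for all u, v ∈ Y, and m(y)^n = 1 for all y with n odd. If the restrictions y₁ ↦ m(y₁, 0) and y₂ ↦ m(0, y₂) are group homomorphisms into the unit circle, then m itself is a group homomorphism: m(y₁, y₂) = m(y₁,0)·m(0,y₂) for all y₁, y₂. -/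
theorem stmt7 {Y₁ Y₂ : Type*} [AddCommGroup Y₁] [AddCommGroup Y₂]
    (m : Y₁ × Y₂ → ℂ) (habs : ∀ y, ‖m y‖ = 1)
    (heq : ∀ u v : Y₁ × Y₂, m (u + v) * m (u - v) = m u ^ 2)
    (n : ℕ) (hodd : Odd n) (hroot : ∀ y, m y ^ n = 1)
    (hres1 : ∀ a b : Y₁, m (a + b, 0) = m (a, 0) * m (b, 0))
    (hres2 : ∀ a b : Y₂, m ((0 : Y₁), a + b) = m (0, a) * m (0, b)) :
    (∀ u v : Y₁ × Y₂, m (u + v) = m u * m v) ∧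
    (∀ (y₁ : Y₁) (y₂ : Y₂), m (y₁, y₂) = m (y₁, 0) * m (0, y₂)) := by
  have hne : ∀ y, m y ≠ 0 := by
    intro y hy
    have := habs y
    rw [hy] at this
    simp at this
  have m0 : m 0 = 1 := by
    have h0 := hres1 0 0
    simp only [add_zero] at h0
    have h00 : ((0 : Y₁), (0 : Y₂)) = (0 : Y₁ × Y₂) := rfl
    rw [h00] at h0
    have := hne 0
    field_simp at h0
    tauto
  have hdouble : ∀ u : Y₁ × Y₂, m (u + u) = m u ^ 2 := by
    intro u
    have := heq u u
    rw [sub_self, m0, mul_one] at this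
    exact this
  have hsq : ∀ u v : Y₁ × Y₂, m (u + v) ^ 2 = (m u * m v) ^ 2 := by
    intro u v
    have h := heq (u + v) (u - v)
    have e1 : u + v + (u - v) = u + u := by abel
    have e2 : u + v - (u - v) = v + v := by abel
    rw [e1, e2, hdouble, hdouble] at h
    rw [← h, mul_pow]
  have hhom : ∀ u v : Y₁ × Y₂, m (u + v) = m u * m v := by
    intro u v
    obtain ⟨k, hk⟩ := hodd
    have hn : m (u + v) ^ n = (m u * m v) ^ n := by
      rw [mul_pow, hroot, hroot, hroot, mul_one]
    rw [hk, pow_add, pow_add, pow_mul, pow_mul, hsq u v, pow_one, pow_one] at hn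
    exact mul_left_cancel₀ (pow_ne_zero _ (pow_ne_zero _ (mul_ne_zero (hne u) (hne v)))) hn
  refine ⟨hhom, fun y₁ y₂ => ?_⟩
  have : ((y₁, y₂) : Y₁ × Y₂) = (y₁, 0) + (0, y₂) := by simp
  rw [this, hhom]
end

section
/- Suppose b : Y₁ × Y₂ → ℂ satisfies b(u+v)·b(u−v) = b(u)² for all u, v, together with b(y₁, 0) = b(0, y₂) = 1 for all y₁ ∈ Y₁, y₂ ∈ Y₂. Then b(2y₁, y₂) = 1 for all y₁ ∈ Y₁ and y₂ ∈ Y₂. -/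
theorem stmt8 {Y₁ Y₂ : Type*} [AddCommGroup Y₁] [AddCommGroup Y₂]
    (b : Y₁ × Y₂ → ℂ)
    (heq : ∀ u v : Y₁ × Y₂, b (u + v) * b (u - v) = b u ^ 2)
    (h1 : ∀ y₁ : Y₁, b (y₁, 0) = 1) (h2 : ∀ y₂ : Y₂, b ((0 : Y₁), y₂) = 1) :
    ∀ (y₁ : Y₁) (y₂ : Y₂), b (2 • y₁, y₂) = 1 := by
  intro y₁ y₂
  have := heq (y₁, 0) (-y₁, -y₂)
  simp only [Prod.mk_add_mk, Prod.mk_sub_mk, add_neg_cancel, zero_add, sub_neg_eq_add,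
    zero_sub, neg_neg, Prod.mk.injEq] at this
  rw [h1, h2, one_pow, one_mul] at this
  rw [two_smul]
  exact this
end

section
/- Let l : Y → ℂ satisfy |l(y)| = 1, l(−y) = conj(l(y)), l(y)^n = 1, and ∏_{j=1}^n l(y_j + y) = ∏_{j=1}^n l(y_j − y) whenever ∑_{j=1}^n y_j = 0 (n ≥ 3). Then m(y) := l(y)² satisfies m(u+v)·m(u−v) = m(u)² for all u, v ∈ Y. -/
theorem stmt12 {Y : Type*} [AddCommGroup Y] (l : Y → ℂ)
    (habs : ∀ y, ‖l y‖ = 1)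
    (hsym : ∀ y : Y, l (-y) = starRingEnd ℂ (l y))
    (n : ℕ) (hn : 3 ≤ n) (hroot : ∀ y, l y ^ n = 1)
    (heq : ∀ (ys : Fin n → Y) (y : Y), (∑ j, ys j) = 0 →
      (∏ j, l (ys j + y)) = ∏ j, l (ys j - y)) :
    ∀ u v : Y, l (u + v) ^ 2 * l (u - v) ^ 2 = (l u ^ 2) ^ 2 := by
  haveI : NeZero n := ⟨by omega⟩
  have hconj : ∀ x : Y, l x * starRingEnd ℂ (l x) = 1 := by
    intro x
    rw [Complex.mul_conj, Complex.normSq_eq_norm_sq, habs]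
    norm_num
  intro u v
  have hne1 : ¬ (n = 1) := by omega
  have h01 : (0 : Fin n) ≠ 1 := by
    simp [Fin.ext_iff, Fin.val_one']
    omega
  set ys : Fin n → Y := fun j => if j = 0 then v else if j = 1 then -v else 0 with hys
  have hsum : (∑ j, ys j) = 0 := by
    rw [Finset.sum_eq_add_of_mem (0 : Fin n) (1 : Fin n) (Finset.mem_univ _)
      (Finset.mem_univ _) h01]
    · simp [hys, h01, hne1]
    · intro k _ hk
      simp [hys, hk.1, hk.2]
  have hprod : ∀ (g : Fin n → ℂ) (A B C : ℂ), g 0 = A → g 1 = B →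
      (∀ j : Fin n, j ≠ 0 → j ≠ 1 → g j = C) →
      ∏ j, g j = A * B * C ^ (n - 2) := by
    intro g A B C hA hB hC
    have hcompl : ({0, 1} : Finset (Fin n))ᶜ.card = n - 2 := by
      rw [Finset.card_compl, Finset.card_pair h01]
      simp
    rw [← Finset.prod_mul_prod_compl ({0, 1} : Finset (Fin n)) g,
      Finset.prod_pair h01, hA, hB]
    congr 1
    rw [Finset.prod_congr rfl (fun j hj => by
      simp only [Finset.mem_compl, Finset.mem_insert, Finset.mem_singleton, not_or] at hj
      exact hC j hj.1 hj.2), Finset.prod_const, hcompl]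
  have E := heq ys u hsum
  rw [hprod (fun j => l (ys j + u)) (l (v + u)) (l (-v + u)) (l u)
      (by simp [hys, h01, hne1]) (by simp [hys, h01, hne1])
      (fun j hj0 hj1 => by simp [hys, hj0, hj1]),
    hprod (fun j => l (ys j - u)) (l (v - u)) (l (-v - u)) (l (-u))
      (by simp [hys, h01, hne1]) (by simp [hys, h01, hne1])
      (fun j hj0 hj1 => by simp [hys, hj0, hj1])] at E
  -- rewrite negatives using hsym
  have harg1 : -v + u = -(v - u) := by abel
  have harg2 : -v - u = -(v + u) := by abel
  rw [harg1, harg2, hsym (v - u), hsym (v + u), hsym u] at E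
  set P := l (v + u) with hP
  set Q := l (v - u) with hQ
  set c := l u with hc
  set k := n - 2 with hk
  have e1 : Q * starRingEnd ℂ Q = 1 := hconj _
  have e2 : P * starRingEnd ℂ P = 1 := hconj _
  have e3 : c ^ k * (starRingEnd ℂ c) ^ k = 1 := by
    rw [← mul_pow, hconj, one_pow]
  -- from E : P * conj Q * c^k = Q * conj P * (conj c)^k
  have step : P ^ 2 * c ^ k * c ^ k * (Q * starRingEnd ℂ Q) =
      Q ^ 2 * (P * starRingEnd ℂ P) * (c ^ k * (starRingEnd ℂ c) ^ k) := by
    calc P ^ 2 * c ^ k * c ^ k * (Q * starRingEnd ℂ Q)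
        = (P * starRingEnd ℂ Q * c ^ k) * (P * c ^ k * Q) := by ring
      _ = (Q * starRingEnd ℂ P * (starRingEnd ℂ c) ^ k) * (P * c ^ k * Q) := by rw [E]
      _ = Q ^ 2 * (P * starRingEnd ℂ P) * (c ^ k * (starRingEnd ℂ c) ^ k) := by ring
  rw [e1, e2, e3, mul_one, mul_one, mul_one] at step
  -- step : P ^ 2 * c ^ k * c ^ k = Q ^ 2
  have hc2n : c ^ (2 * n) = 1 := by
    rw [two_mul, pow_add, hroot, one_mul]
  have hsplit : c ^ (2 * n) = c ^ k * c ^ k * c ^ 4 := by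
    rw [← pow_add, ← pow_add, hk]
    congr 1
    omega
  have hPQ : P ^ 2 = Q ^ 2 * c ^ 4 := by
    calc P ^ 2 = P ^ 2 * c ^ (2 * n) := by rw [hc2n]; ring
      _ = (P ^ 2 * c ^ k * c ^ k) * c ^ 4 := by rw [hsplit]; ring
      _ = Q ^ 2 * c ^ 4 := by rw [step]
  have hQconj : Q * l (u - v) = 1 := by
    have harg3 : v - u = -(u - v) := by abel
    rw [hQ, harg3, hsym, mul_comm]
    exact hconj _
  have hPuv : P = l (u + v) := by rw [hP, add_comm]
  calc l (u + v) ^ 2 * l (u - v) ^ 2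
      = P ^ 2 * l (u - v) ^ 2 := by rw [hPuv]
    _ = (Q * l (u - v)) ^ 2 * c ^ 4 := by rw [hPQ]; ring
    _ = (l u ^ 2) ^ 2 := by rw [hQconj]; ring
end

section
/- Let μ be a probability measure on a locally compact abelian group X, and suppose the characteristic function μ̂ satisfies ∏_{j=1}^n μ̂(y_j + y) = ∏_{j=1}^n μ̂(y_j − y) whenever ∑ y_j = 0, with μ̂(y)^n > 0 for all y (n ≥ 3). Then the function l(y) = μ̂(y)/|μ̂(y)| satisfies l(−y) = conj(l(y)) and l(y)^n = 1 for all y ∈ Y. -/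
open MeasureTheory

theorem stmt14 {X : Type*} [AddCommGroup X] [TopologicalSpace X] [IsTopologicalAddGroup X]
    [LocallyCompactSpace X] [MeasurableSpace X] [BorelSpace X]
    (μ : Measure X) [IsProbabilityMeasure μ]
    (μhat : AddChar X Circle → ℂ)
    (hμhat : ∀ y : AddChar X Circle, μhat y = ∫ x, (y x : ℂ) ∂μ)
    (hne : ∀ y, μhat y ≠ 0)
    (n : ℕ) (hn : 3 ≤ n)
    (heq : ∀ (ys : Fin n → AddChar X Circle) (y : AddChar X Circle),
      (∑ j, ys j) = 0 → (∏ j, μhat (ys j + y)) = ∏ j, μhat (ys j - y))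
    (hpos : ∀ y, ∃ c : ℝ, 0 < c ∧ μhat y ^ n = (c : ℂ))
    (l : AddChar X Circle → ℂ)
    (hl : ∀ y, l y = μhat y / (‖μhat y‖ : ℂ)) :
    (∀ y, l (-y) = starRingEnd ℂ (l y)) ∧ (∀ y, l y ^ n = 1) := by
  have hconj : ∀ y, μhat (-y) = starRingEnd ℂ (μhat y) := by
    intro y
    rw [hμhat, hμhat, ← integral_conj]
    congr 1
    ext x
    rw [AddChar.neg_apply, AddChar.map_neg_eq_inv, Circle.coe_inv_eq_conj]
  constructor
  · intro y
    rw [hl, hl, hconj, map_div₀]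
    congr 1
    · rw [Complex.conj_ofReal, Complex.norm_conj]
  · intro y
    obtain ⟨c, hc, hcn⟩ := hpos y
    have hr : (0:ℝ) < ‖μhat y‖ := by
      simpa using (norm_pos_iff.mpr (hne y))
    have habs : ‖l y‖ = 1 := by
      rw [hl, norm_div, Complex.norm_real, norm_norm, div_self hr.ne']
    have hln : l y ^ n = ((c / (‖μhat y‖) ^ n : ℝ) : ℂ) := by
      rw [hl, div_pow, hcn]
      push_cast
      ring
    have h1 : ‖l y ^ n‖ = 1 := by
      rw [norm_pow, habs, one_pow]
    rw [hln] at h1 ⊢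
    rw [Complex.norm_real, Real.norm_eq_abs, abs_of_pos (by positivity)] at h1
    rw [h1, Complex.ofReal_one]
end

section
/- Let ψ : Y → ℝ satisfy Δ_k³ Δ_{2h} ψ = 0 for all k, h ∈ Y (i.e. for fixed h, Δ_{2h}ψ is a polynomial of degree ≤ 2), and suppose Δ_k² Δ_{2h} ψ(y) = 0 for all k, y in the subgroup 2Y and all h ∈ Y (i.e. Δ_{2h}ψ restricted to 2Y is a polynomial of degree ≤ 1). Then Δ_k² Δ_{2h} ψ(y) = 0 for all k, h, y ∈ Y. -/
/-- Cocycle identity in the step: `Δ_{a+b} g w = Δ_a g (w+b) + Δ_b g w`. -/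
lemma fdiff_add_left {Y : Type*} [AddCommGroup Y] (a b : Y) (g : Y → ℝ) (w : Y) :
    fdiff (a + b) g w = fdiff a g (w + b) + fdiff b g w := by
  simp only [fdiff]
  rw [show w + (a + b) = w + b + a from by abel]
  ring

/-- Cocycle identity for the inner difference of a double difference. -/
lemma fdiff_add_inner {Y : Type*} [AddCommGroup Y] (a b c : Y) (g : Y → ℝ) (w : Y) :
    fdiff c (fdiff (a + b) g) w
      = fdiff c (fdiff a g) (w + b) + fdiff c (fdiff b g) w := by
  simp only [fdiff]
  rw [show w + c + (a + b) = w + b + c + a from by abel,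
    show w + (a + b) = w + b + a from by abel,
    show w + c + b = w + b + c from by abel]
  ring

/-- Difference operators commute. -/
lemma fdiff_comm {Y : Type*} [AddCommGroup Y] (a b : Y) (g : Y → ℝ) (w : Y) :
    fdiff a (fdiff b g) w = fdiff b (fdiff a g) w := by
  simp only [fdiff]
  rw [show w + a + b = w + b + a from by abel]
  ring

theorem stmt17 {Y : Type*} [AddCommGroup Y] (ψ : Y → ℝ)
    (h3 : ∀ k h y : Y, fdiff k (fdiff k (fdiff k (fdiff (2 • h) ψ))) y = 0)
    (h2 : ∀ (k y h : Y),
      fdiff (2 • k) (fdiff (2 • k) (fdiff (2 • h) ψ)) (2 • y) = 0) :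
    ∀ k h y : Y, fdiff k (fdiff k (fdiff (2 • h) ψ)) y = 0 := by
  intro k h y
  set f : Y → ℝ := fdiff (2 • h) ψ with hf
  have H3 : ∀ c w : Y, fdiff c (fdiff c (fdiff c f)) w = 0 := fun c w => h3 c h w
  have H2 : ∀ c z : Y, fdiff (2 • c) (fdiff (2 • c) f) (2 • z) = 0 := fun c z => h2 c z h
  clear h3 h2
  clear_value f
  -- periodicity of the diagonal second difference
  have per : ∀ a w : Y, fdiff a (fdiff a f) (w + a) = fdiff a (fdiff a f) w := by
    intro a w
    have e := H3 a w
    rw [show fdiff a (fdiff a (fdiff a f)) w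
        = fdiff a (fdiff a f) (w + a) - fdiff a (fdiff a f) w from rfl] at e
    linarith
  -- step 1 : diagonal second differences vanish at even points
  have step1 : ∀ c z : Y, fdiff c (fdiff c f) (z + z) = 0 := by
    intro c z
    have e := H2 c z
    rw [two_nsmul c, two_nsmul z] at e
    rw [fdiff_add_left c c (fdiff (c + c) f) (z + z)] at e
    rw [fdiff_add_inner c c c f (z + z + c), fdiff_add_inner c c c f (z + z)] at e
    have p1 := per c (z + z)
    have p2 := per c (z + z + c)
    linarith
  -- step 2 : mixed second differences vanish at points ≡ b mod 2Y
  have step2 : ∀ a b z : Y, fdiff a (fdiff b f) (z + z + b) = 0 := by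
    intro a b z
    have s0 := step1 (a + b) z
    rw [fdiff_add_left a b (fdiff (a + b) f) (z + z)] at s0
    rw [fdiff_add_inner a b a f (z + z + b), fdiff_add_inner a b b f (z + z)] at s0
    have s1 := step1 a (z + b)
    rw [show z + b + (z + b) = z + z + b + b from by abel] at s1
    have s2 := step1 b z
    have c1 := fdiff_comm b a f (z + z + b)
    linarith
  -- step 3 : mixed second differences vanish at even points
  have step3 : ∀ c b z : Y, fdiff c (fdiff b f) (z + z) = 0 := by
    intro c b z
    have e := fdiff_add_left (c - b) b (fdiff b f) (z + z)
    rw [sub_add_cancel] at e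
    rw [step2 (c - b) b z, step1 b z] at e
    linarith
  -- conclusion
  have e := fdiff_add_left (k - y) y (fdiff k f) y
  rw [sub_add_cancel] at e
  have t1 := step3 (k - y) k y
  have t2 := step2 k y 0
  rw [show (0 : Y) + 0 + y = y from by abel] at t2
  have c1 := fdiff_comm y k f y
  linarith
end

section
/- The function f : ℤ → ℝ defined by f(m) = exp(−m²) if m is even and f(m) = exp(−m² + ε) if m is odd satisfies ∏_{j=1}^n f(m_j + k) = ∏_{j=1}^n f(m_j − k) for all integers m₁,…,m_n, k with ∑ m_j = 0, for every n ≥ 1 and every ε ∈ ℝ. -/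
theorem stmt18 (ε : ℝ) (f : ℤ → ℝ)
    (hf : ∀ m : ℤ, f m = if Even m then Real.exp (-(m : ℝ) ^ 2)
      else Real.exp (-(m : ℝ) ^ 2 + ε))
    (n : ℕ) (hn : 1 ≤ n) :
    ∀ (ms : Fin n → ℤ) (k : ℤ), (∑ j, ms j) = 0 →
      (∏ j, f (ms j + k)) = ∏ j, f (ms j - k) := by
  intro ms k hsum
  have hg : ∀ m : ℤ, f m = Real.exp (-(m : ℝ) ^ 2 + if Even m then 0 else ε) := by
    intro m
    rw [hf m]
    split <;> simp
  calc (∏ j, f (ms j + k))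
      = Real.exp (∑ j, (-((ms j + k : ℤ) : ℝ) ^ 2 + if Even (ms j + k) then 0 else ε)) := by
        rw [Real.exp_sum]; exact Finset.prod_congr rfl fun j _ => hg _
    _ = Real.exp (∑ j, (-((ms j - k : ℤ) : ℝ) ^ 2 + if Even (ms j - k) then 0 else ε)) := by
        congr 1
        rw [Finset.sum_add_distrib, Finset.sum_add_distrib]
        congr 1
        · have : ∑ j, -((ms j + k : ℤ) : ℝ) ^ 2 - ∑ j, -((ms j - k : ℤ) : ℝ) ^ 2 = 0 := by
            rw [← Finset.sum_sub_distrib]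
            have : ∀ j : Fin n, -((ms j + k : ℤ) : ℝ) ^ 2 - -((ms j - k : ℤ) : ℝ) ^ 2
                = -4 * (k : ℝ) * ((ms j : ℤ) : ℝ) := by
              intro j; push_cast; ring
            rw [Finset.sum_congr rfl fun j _ => this j, ← Finset.mul_sum]
            have : ((∑ j, ms j : ℤ) : ℝ) = 0 := by rw [hsum]; norm_num
            push_cast at this
            rw [this, mul_zero]
          linarith
        · refine Finset.sum_congr rfl fun j _ => ?_
          have : Even (ms j + k) ↔ Even (ms j - k) := by
            rw [Int.even_add, Int.even_sub]
          simp [this]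
    _ = ∏ j, f (ms j - k) := by
        rw [Real.exp_sum]; exact (Finset.prod_congr rfl fun j _ => (hg _).symm)
end

section
/- The function f : ℤ → ℂ defined by f(m) = exp(−a m² + i(π/2) m³) (a > 0) satisfies ∏_{j=1}^4 f(m_j + k) = ∏_{j=1}^4 f(m_j − k) for all integers m₁, m₂, m₃, m₄, k with m₁+m₂+m₃+m₄ = 0, and f(m)⁴ > 0 for all m ∈ ℤ. -/
theorem stmt19 (a : ℝ) (ha : 0 < a) (f : ℤ → ℂ)
    (hf : ∀ m : ℤ, f m = Complex.exp (-(a : ℂ) * (m : ℂ) ^ 2 +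
      Complex.I * (Real.pi / 2 : ℝ) * (m : ℂ) ^ 3)) :
    (∀ (ms : Fin 4 → ℤ) (k : ℤ), (∑ j, ms j) = 0 →
      (∏ j, f (ms j + k)) = ∏ j, f (ms j - k)) ∧
    (∀ m : ℤ, ∃ c : ℝ, 0 < c ∧ f m ^ 4 = (c : ℂ)) := by
  constructor
  · intro ms k hsum
    simp only [hf]
    rw [← Complex.exp_sum, ← Complex.exp_sum]
    have heven : Even (∑ j, (ms j) ^ 2) := by
      have h1 : (∑ j, (ms j) ^ 2) = (∑ j, ((ms j) ^ 2 - ms j)) + ∑ j, ms j := by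
        rw [Finset.sum_sub_distrib]; ring
      rw [h1, hsum, add_zero]
      have he : ∀ i : Fin 4, Even ((ms i) ^ 2 - ms i) := by
        intro i; simp [Int.even_sub, Int.even_pow]
      rw [Fin.sum_univ_four]
      exact (((he 0).add (he 1)).add (he 2)).add (he 3)
    obtain ⟨s, hs⟩ := heven
    have h1 : ((ms 0 : ℂ)) + ms 1 + ms 2 + ms 3 = 0 := by
      have := hsum
      rw [Fin.sum_univ_four] at this
      exact_mod_cast congrArg (fun z : ℤ => (z : ℂ)) this
    have h2 : ((ms 0 : ℂ)) ^ 2 + (ms 1 : ℂ) ^ 2 + (ms 2 : ℂ) ^ 2 + (ms 3 : ℂ) ^ 2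
        = (s : ℂ) + s := by
      rw [Fin.sum_univ_four] at hs
      exact_mod_cast congrArg (fun z : ℤ => (z : ℂ)) hs
    have hA : (∑ j, (-(a : ℂ) * ((ms j + k : ℤ) : ℂ) ^ 2 +
          Complex.I * (Real.pi / 2 : ℝ) * ((ms j + k : ℤ) : ℂ) ^ 3))
        = (∑ j, (-(a : ℂ) * ((ms j - k : ℤ) : ℂ) ^ 2 +
          Complex.I * (Real.pi / 2 : ℝ) * ((ms j - k : ℤ) : ℂ) ^ 3))
          + ((3 * k * s + 2 * k ^ 3 : ℤ) : ℂ) * (2 * Real.pi * Complex.I) := by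
      simp only [Fin.sum_univ_four]
      push_cast
      linear_combination (-(4 : ℂ) * a * k) * h1 +
        (3 * Complex.I * (Real.pi : ℂ) * k) * h2
    rw [hA, Complex.exp_add, Complex.exp_int_mul_two_pi_mul_I, mul_one]
  · intro m
    refine ⟨Real.exp (-(4 * a) * (m : ℝ) ^ 2), Real.exp_pos _, ?_⟩
    rw [hf, ← Complex.exp_nat_mul]
    have h4 : (4 : ℕ) * (-(a : ℂ) * (m : ℂ) ^ 2 +
        Complex.I * (Real.pi / 2 : ℝ) * (m : ℂ) ^ 3)
        = ((-(4 * a) * (m : ℝ) ^ 2 : ℝ) : ℂ) +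
          ((m ^ 3 : ℤ) : ℂ) * (2 * Real.pi * Complex.I) := by
      push_cast; ring
    rw [h4, Complex.exp_add, Complex.exp_int_mul_two_pi_mul_I, mul_one,
      ← Complex.ofReal_exp]
end
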